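/- Let S be a compact metrizable space with a closed partial order. Then the stochastic order on probability measures on S is closed with respect to weak convergence: if μ_n¹ ≤ μ_n² (stochastic order) for all n and μ_n^i ⇒ μ_∞^i weakly (i = 1,2), then μ_∞¹ ≤ μ_∞². -/

import Mathlib

open MeasureTheory Filter

open Set TopologicalSpace BoundedContinuousFunction
open scoped NNReal ENNReal Topology

lemma aux_eq_of_le_on_closed {X : Type*} [MetricSpace X] [MeasurableSpace X] [BorelSpace X]
    (μ ν : Measure X) [IsProbabilityMeasure μ] [IsProbabilityMeasure ν]
    (h : ∀ F : Set X, IsClosed F → μ F ≤ ν F) : μ = ν := by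
  have hopen : ∀ U : Set X, IsOpen U → ν U ≤ μ U := by
    intro U hU
    have h1 : μ Uᶜ ≤ ν Uᶜ := h _ hU.isClosed_compl
    rw [prob_compl_eq_one_sub hU.measurableSet, prob_compl_eq_one_sub hU.measurableSet] at h1
    have e1 : ν U = 1 - (1 - ν U) :=
      (ENNReal.sub_sub_cancel ENNReal.one_ne_top prob_le_one).symm
    rw [e1]
    exact le_trans (tsub_le_tsub_left h1 1)
      (by rw [ENNReal.sub_sub_cancel ENNReal.one_ne_top prob_le_one])
  have hF : ∀ F : Set X, IsClosed F → μ F = ν F := by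
    intro F hFc
    refine le_antisymm (h F hFc) ?_
    rw [Set.measure_eq_iInf_isOpen F μ]
    refine le_iInf fun U => le_iInf fun hFU => le_iInf fun hU => ?_
    exact le_trans (measure_mono hFU) (hopen U hU)
  refine ext_of_generate_finite {s : Set X | IsClosed s} ?_ ?_ (fun s hs => hF s hs) ?_
  · rw [BorelSpace.measurable_eq (α := X), borel_eq_generateFrom_isClosed]
  · exact fun s hs t ht _ => hs.inter ht
  · simp [measure_univ]


/-- `μ` is smaller than `ν` in the stochastic order: there is a coupling `lam` with
marginals `μ` and `ν` concentrated on `{(x,y) : x ≤ y}`. -/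
def stochLE {S : Type*} [MeasurableSpace S] [Preorder S] (μ ν : Measure S) : Prop :=
  ∃ lam : Measure (S × S), IsProbabilityMeasure lam ∧
    lam.map Prod.fst = μ ∧ lam.map Prod.snd = ν ∧
    lam {p : S × S | p.1 ≤ p.2} = 1

set_option maxHeartbeats 1000000 in
/-- On a compact metrizable space with a closed partial order, the stochastic order on
probability measures is closed under weak convergence: if `μ¹_n ≤ μ²_n` for all `n` and
`μ^i_n ⇒ μ^i_∞` weakly, then `μ¹_∞ ≤ μ²_∞`. -/
theorem stmt14 {S : Type*} [MetricSpace S] [CompactSpace S] [PartialOrder S]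
    [MeasurableSpace S] [BorelSpace S]
    (hclosed : IsClosed {p : S × S | p.1 ≤ p.2})
    (μ₁ μ₂ : ℕ → ProbabilityMeasure S) (ν₁ ν₂ : ProbabilityMeasure S)
    (hle : ∀ n, stochLE (μ₁ n : Measure S) (μ₂ n : Measure S))
    (h₁ : Tendsto μ₁ atTop (nhds ν₁)) (h₂ : Tendsto μ₂ atTop (nhds ν₂)) :
    stochLE (ν₁ : Measure S) (ν₂ : Measure S) := by
  classical
  choose lam hprob hfst hsnd hone using hle
  haveI : ∀ n, IsProbabilityMeasure (lam n) := hprob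
  set U : Ultrafilter ℕ := Ultrafilter.of atTop with hUdef
  have hUle : (U : Filter ℕ) ≤ atTop := Ultrafilter.of_le _
  -- the limit functional along the ultrafilter
  have hex : ∀ f : (S × S) →ᵇ ℝ≥0, ∃ L : ℝ≥0∞,
      Tendsto (fun n => ∫⁻ x, (f x : ℝ≥0∞) ∂(lam n)) U (𝓝 L) := by
    intro f
    obtain ⟨L, -, hL⟩ := (isCompact_univ : IsCompact (univ : Set ℝ≥0∞)).ultrafilter_le_nhds
      (U.map fun n => ∫⁻ x, (f x : ℝ≥0∞) ∂(lam n))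
      (by rw [principal_univ]; exact le_top)
    refine ⟨L, ?_⟩
    rwa [Ultrafilter.coe_map] at hL
  choose Lim hLim using hex
  have hmeas : ∀ f : (S × S) →ᵇ ℝ≥0, Measurable fun x => (f x : ℝ≥0∞) :=
    fun f => measurable_coe_nnreal_ennreal.comp f.continuous.measurable
  have hfin : ∀ f : (S × S) →ᵇ ℝ≥0, Lim f ≠ ∞ := by
    intro f
    set C : ℝ≥0 := nndist f 0 with hC
    have hb : Lim f ≤ (C : ℝ≥0∞) := by
      refine le_of_tendsto (hLim f) (Eventually.of_forall fun n => ?_)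
      calc ∫⁻ x, (f x : ℝ≥0∞) ∂(lam n) ≤ ∫⁻ _, (C : ℝ≥0∞) ∂(lam n) := by
            refine lintegral_mono fun x => ?_
            exact ENNReal.coe_le_coe.2 (BoundedContinuousFunction.NNReal.upper_bound f x)
        _ = (C : ℝ≥0∞) := by simp
    exact (lt_of_le_of_lt hb ENNReal.coe_lt_top).ne
  have hadd : ∀ f g : (S × S) →ᵇ ℝ≥0, Lim (f + g) = Lim f + Lim g := by
    intro f g
    refine tendsto_nhds_unique (hLim (f + g)) ?_
    have hpt : ∀ x, (((f + g) x : ℝ≥0) : ℝ≥0∞) = (f x : ℝ≥0∞) + (g x : ℝ≥0∞) := by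
      intro x; simp
    have he : (fun n => ∫⁻ x, ((f + g) x : ℝ≥0∞) ∂(lam n))
        = fun n => (∫⁻ x, (f x : ℝ≥0∞) ∂(lam n)) + ∫⁻ x, (g x : ℝ≥0∞) ∂(lam n) := by
      funext n
      simp_rw [hpt]
      exact lintegral_add_left (hmeas f) _
    rw [he]
    exact (hLim f).add (hLim g)
  have hsmul : ∀ (c : ℝ≥0) (f : (S × S) →ᵇ ℝ≥0), Lim (c • f) = (c : ℝ≥0∞) * Lim f := by
    intro c f
    refine tendsto_nhds_unique (hLim (c • f)) ?_
    have hpt : ∀ x, (((c • f) x : ℝ≥0) : ℝ≥0∞) = (c : ℝ≥0∞) * (f x : ℝ≥0∞) := by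
      intro x
      rw [BoundedContinuousFunction.coe_smul]
      simp [ENNReal.coe_mul]
    have he : (fun n => ∫⁻ x, ((c • f) x : ℝ≥0∞) ∂(lam n))
        = fun n => (c : ℝ≥0∞) * ∫⁻ x, (f x : ℝ≥0∞) ∂(lam n) := by
      funext n
      simp_rw [hpt]
      exact lintegral_const_mul _ (hmeas f)
    rw [he]
    exact ENNReal.Tendsto.const_mul (hLim f) (Or.inr ENNReal.coe_ne_top)
  -- the positive linear functional
  set Λ : ((S × S) →ᵇ ℝ≥0) →ₗ[ℝ≥0] ℝ≥0 :=
    { toFun := fun f => (Lim f).toNNReal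
      map_add' := fun f g => by
        show (Lim (f + g)).toNNReal = (Lim f).toNNReal + (Lim g).toNNReal
        rw [hadd f g, ENNReal.toNNReal_add (hfin f) (hfin g)]
      map_smul' := fun c f => by
        show (Lim (c • f)).toNNReal = c • (Lim f).toNNReal
        rw [hsmul c f, ENNReal.toNNReal_mul, ENNReal.toNNReal_coe, smul_eq_mul] } with hΛdef
  have hΛcoe : ∀ f : (S × S) →ᵇ ℝ≥0, (Λ f : ℝ≥0∞) = Lim f := by
    intro f
    simp only [hΛdef, LinearMap.coe_mk, AddHom.coe_mk]
    exact ENNReal.coe_toNNReal (hfin f)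
  set Λc : CompactlySupportedContinuousMap (S × S) ℝ≥0 →ₗ[ℝ≥0] ℝ≥0 :=
    { toFun := fun f => Λ f.toBoundedContinuousFunction
      map_add' := fun f g => (congrArg Λ (BoundedContinuousFunction.ext fun x => rfl :
        (f + g).toBoundedContinuousFunction =
          f.toBoundedContinuousFunction + g.toBoundedContinuousFunction)).trans (map_add Λ _ _)
      map_smul' := fun c f => (congrArg Λ (BoundedContinuousFunction.ext fun x => rfl :
        (c • f).toBoundedContinuousFunction =
          c • f.toBoundedContinuousFunction)).trans (map_smul Λ c _) } with hΛcdef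
  have hmk : ∀ b : (S × S) →ᵇ ℝ≥0,
      Λc (CompactlySupportedContinuousMap.continuousMapEquiv b.toContinuousMap) = Λ b :=
    fun b => rfl
  -- the content
  have hsupdis : ∀ K₁ K₂ : Compacts (S × S), Disjoint (K₁ : Set (S × S)) K₂ →
      IsClosed (K₁ : Set (S × S)) → IsClosed (K₂ : Set (S × S)) →
      rieszContentAux Λc (K₁ ⊔ K₂) = rieszContentAux Λc K₁ + rieszContentAux Λc K₂ := by
    intro K₁ K₂ hdis _ _
    refine le_antisymm (rieszContentAux_sup_le Λc K₁ K₂) ?_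
    obtain ⟨g, hg0, hg1, hg01⟩ := exists_continuous_zero_one_of_isClosed
      K₂.isCompact.isClosed K₁.isCompact.isClosed hdis.symm
    set gp : (S × S) →ᵇ ℝ≥0 := (mkOfCompact g).nnrealPart with hgp
    set gq : (S × S) →ᵇ ℝ≥0 := (mkOfCompact ((1 : C(S × S, ℝ)) - g)).nnrealPart with hgq
    have hgpq : gp + gq = 1 := by
      ext x
      have h01 := hg01 x
      have key : gp x + gq x = 1 := by
        have e1 : gp x = Real.toNNReal (g x) := rfl
        have e2 : gq x = Real.toNNReal (1 - g x) := rfl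
        rw [e1, e2, ← Real.toNNReal_add h01.1 (by linarith [h01.2])]
        norm_num
      exact_mod_cast key
    have hgpq' : ∀ x, gp x + gq x = 1 := by
      intro x
      have := congrArg (fun u : (S × S) →ᵇ ℝ≥0 => u x) hgpq
      simpa using this
    have hgp1 : ∀ x ∈ K₁, gp x = 1 := by
      intro x hx
      simp [hgp, nnrealPart_coeFn_eq, hg1 hx]
    have hgq1 : ∀ x ∈ K₂, gq x = 1 := by
      intro x hx
      simp [hgq, nnrealPart_coeFn_eq, hg0 hx]
    refine le_csInf (rieszContentAux_image_nonempty Λc _) ?_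
    rintro b ⟨f, hf, rfl⟩
    have h1 : rieszContentAux Λc K₁ ≤ Λ (f * gp) := by
      refine (rieszContentAux_le Λc (f := CompactlySupportedContinuousMap.continuousMapEquiv
        (f * gp).toContinuousMap) fun x hx => ?_).trans_eq (hmk _)
      have hfx : (1 : ℝ≥0) ≤ f x := hf x (Or.inl hx)
      calc (1 : ℝ≥0) ≤ f x := hfx
        _ = f x * gp x := by rw [hgp1 x hx, mul_one]
        _ = (f * gp) x := rfl
    have h2 : rieszContentAux Λc K₂ ≤ Λ (f * gq) := by
      refine (rieszContentAux_le Λc (f := CompactlySupportedContinuousMap.continuousMapEquiv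
        (f * gq).toContinuousMap) fun x hx => ?_).trans_eq (hmk _)
      have hfx : (1 : ℝ≥0) ≤ f x := hf x (Or.inr hx)
      calc (1 : ℝ≥0) ≤ f x := hfx
        _ = f x * gq x := by rw [hgq1 x hx, mul_one]
        _ = (f * gq) x := rfl
    have hsplit : f * gp + f * gq = f := by
      rw [← mul_add, hgpq, mul_one]
    calc rieszContentAux Λc K₁ + rieszContentAux Λc K₂ ≤ Λ (f * gp) + Λ (f * gq) :=
          add_le_add h1 h2
      _ = Λ (f * gp + f * gq) := (map_add Λ _ _).symm
      _ = Λ f := by rw [hsplit]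
  set μC : Content (S × S) :=
    { toFun := rieszContentAux Λc
      mono' := fun K₁ K₂ h => rieszContentAux_mono Λc h
      sup_disjoint' := hsupdis
      sup_le' := fun K₁ K₂ => rieszContentAux_sup_le Λc K₁ K₂ } with hμCdef
  set lamI : Measure (S × S) := μC.measure with hlamIdef
  -- lower bound on closed sets
  have hlow : ∀ (C : Set (S × S)) (hC : IsClosed C),
      ((rieszContentAux Λc ⟨C, hC.isCompact⟩ : ℝ≥0) : ℝ≥0∞) ≤ lamI C := by
    intro C hC
    rw [hlamIdef, μC.measure_apply hC.measurableSet]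
    exact μC.le_outerMeasure_compacts ⟨C, hC.isCompact⟩
  -- upper bound via test functions
  have hupp : ∀ (A V : Set (S × S)) (hV : IsOpen V), A ⊆ V →
      ∀ f : (S × S) →ᵇ ℝ≥0, (∀ x ∈ V, (1 : ℝ≥0) ≤ f x) → lamI A ≤ Lim f := by
    intro A V hV hAV f hf
    have h1 : lamI A ≤ lamI V := measure_mono hAV
    have h2 : lamI V = μC.innerContent ⟨V, hV⟩ := by
      rw [hlamIdef, μC.measure_apply hV.measurableSet, μC.outerMeasure_of_isOpen V hV]
    have h3 : μC.innerContent ⟨V, hV⟩ ≤ Lim f := by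
      refine iSup₂_le fun K hK => ?_
      rw [← hΛcoe f]
      exact ENNReal.coe_le_coe.2 ((rieszContentAux_le Λc
        (f := CompactlySupportedContinuousMap.continuousMapEquiv f.toContinuousMap)
        fun x hx => hf x (hK hx)).trans_eq (hmk f))
    exact h1.trans (h2 ▸ h3)
  -- Lim of test functions dominating full sets
  have hLim_ge_one : ∀ (C : Set (S × S)), MeasurableSet C → (∀ n, lam n C = 1) →
      ∀ f : (S × S) →ᵇ ℝ≥0, (∀ x ∈ C, (1 : ℝ≥0) ≤ f x) → (1 : ℝ≥0∞) ≤ Lim f := by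
    intro C hCm hCfull f hf
    refine ge_of_tendsto (hLim f) (Eventually.of_forall fun n => ?_)
    calc (1 : ℝ≥0∞) = lam n C := (hCfull n).symm
      _ = ∫⁻ _ in C, 1 ∂(lam n) := by rw [setLIntegral_one]
      _ ≤ ∫⁻ x in C, (f x : ℝ≥0∞) ∂(lam n) :=
          setLIntegral_mono (hmeas f) fun x hx => by exact_mod_cast hf x hx
      _ ≤ ∫⁻ x, (f x : ℝ≥0∞) ∂(lam n) := setLIntegral_le_lintegral _ _
  -- full closed sets have lamI-measure ≥ 1
  have hcont_ge : ∀ (C : Set (S × S)) (hC : IsClosed C), (∀ n, lam n C = 1) →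
      (1 : ℝ≥0∞) ≤ lamI C := by
    intro C hC hfull
    refine le_trans ?_ (hlow C hC)
    have h1 : (1 : ℝ≥0) ≤ rieszContentAux Λc ⟨C, hC.isCompact⟩ := by
      refine le_csInf (rieszContentAux_image_nonempty Λc _) ?_
      rintro b ⟨f, hf, rfl⟩
      have := hLim_ge_one C hC.measurableSet hfull f hf
      rw [← hΛcoe f] at this
      exact_mod_cast this
    exact_mod_cast h1
  have hLim_one : Lim 1 = 1 := by
    refine tendsto_nhds_unique (hLim 1) ?_
    have he : (fun n => ∫⁻ x, ((1 : (S × S) →ᵇ ℝ≥0) x : ℝ≥0∞) ∂(lam n)) = fun _ => 1 := by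
      funext n
      simp
    rw [he]
    exact tendsto_const_nhds
  have huniv : lamI univ = 1 := by
    refine le_antisymm ?_ (hcont_ge univ isClosed_univ fun n => measure_univ)
    have := hupp univ univ isOpen_univ Subset.rfl 1 (fun x _ => by simp)
    rwa [hLim_one] at this
  haveI hlamIprob : IsProbabilityMeasure lamI := ⟨huniv⟩
  have hfull : lamI {p : S × S | p.1 ≤ p.2} = 1 := by
    refine le_antisymm prob_le_one (hcont_ge _ hclosed hone)
  -- marginal bounds
  have hmar : ∀ (π : S × S → S), Continuous π →
      ∀ (μs : ℕ → ProbabilityMeasure S) (ν : ProbabilityMeasure S),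
      (∀ n, (lam n).map π = (μs n : Measure S)) →
      Tendsto μs atTop (nhds ν) →
      ∀ F : Set S, IsClosed F → lamI (π ⁻¹' F) ≤ (ν : Measure S) F := by
    intro π hπ μs ν hmap hten F hFc
    refine ENNReal.le_of_forall_pos_le_add fun ε hε _ => ?_
    obtain ⟨Uo, hFU, hUo, hUm⟩ := Set.exists_isOpen_le_add F (ν : Measure S)
      (ε := (ε : ℝ≥0∞)) (by exact_mod_cast hε.ne')
    obtain ⟨g, hg0, hg1, hg01⟩ := exists_continuous_zero_one_of_isClosed
      hUo.isClosed_compl hFc (Set.disjoint_left.mpr fun x hx hxF => hx (hFU hxF))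
    set h : S →ᵇ ℝ≥0 :=
      (mkOfCompact (⟨fun x => min (2 * g x) 1, (continuous_const.mul g.continuous).min continuous_const⟩ : C(S, ℝ))).nnrealPart with hh
    have hhx : ∀ x, h x = Real.toNNReal (min (2 * g x) 1) := fun x => rfl
    set W : Set S := {x | 1/2 < g x} with hW
    have hWopen : IsOpen W := isOpen_lt continuous_const g.continuous
    have hFW : F ⊆ W := by
      intro x hx
      have : g x = 1 := hg1 hx
      simp only [hW, mem_setOf_eq, this]
      norm_num
    have hone' : ∀ x ∈ W, (1 : ℝ≥0) ≤ h x := by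
      intro x hx
      have hx' : (1 : ℝ) / 2 < g x := hx
      have hmin : min (2 * g x) 1 = 1 := min_eq_right (by linarith)
      rw [hhx, hmin]
      simp
    have hle_ind : ∀ x, (h x : ℝ≥0∞) ≤ Uo.indicator (1 : S → ℝ≥0∞) x := by
      intro x
      by_cases hxU : x ∈ Uo
      · rw [Set.indicator_of_mem hxU, Pi.one_apply]
        have h1 : h x ≤ 1 := by
          rw [hhx]
          calc Real.toNNReal (min (2 * g x) 1) ≤ Real.toNNReal 1 :=
                Real.toNNReal_mono (min_le_right _ _)
            _ = 1 := Real.toNNReal_one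
        exact_mod_cast h1
      · have : g x = 0 := hg0 hxU
        have h0 : h x = 0 := by
          rw [hhx, this]
          norm_num
        rw [h0]
        simp
    set hb : (S × S) →ᵇ ℝ≥0 := h.compContinuous ⟨π, hπ⟩ with hhb
    have h1 : lamI (π ⁻¹' F) ≤ Lim hb :=
      hupp _ (π ⁻¹' W) (hWopen.preimage hπ) (preimage_mono hFW) hb
        (fun x hx => hone' (π x) hx)
    have heq : ∀ n, ∫⁻ x, (hb x : ℝ≥0∞) ∂(lam n)
        = ∫⁻ y, (h y : ℝ≥0∞) ∂((μs n : Measure S)) := by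
      intro n
      have hmb : Measurable fun y => ((h y : ℝ≥0) : ℝ≥0∞) :=
        measurable_coe_nnreal_ennreal.comp h.continuous.measurable
      have e := lintegral_map (μ := lam n) (g := π) (f := fun y => ((h y : ℝ≥0) : ℝ≥0∞))
        hmb hπ.measurable
      rw [hmap n] at e
      exact e.symm
    have hw : Tendsto (fun n => ∫⁻ y, (h y : ℝ≥0∞) ∂((μs n : Measure S))) atTop
        (nhds (∫⁻ y, (h y : ℝ≥0∞) ∂(ν : Measure S))) :=
      ProbabilityMeasure.tendsto_iff_forall_lintegral_tendsto.mp hten h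
    have h2 : Lim hb = ∫⁻ y, (h y : ℝ≥0∞) ∂(ν : Measure S) := by
      refine tendsto_nhds_unique (hLim hb) ?_
      have h' := hw.mono_left hUle
      simp_rw [← heq] at h'
      exact h'
    have h3 : ∫⁻ y, (h y : ℝ≥0∞) ∂(ν : Measure S) ≤ (ν : Measure S) Uo := by
      calc ∫⁻ y, (h y : ℝ≥0∞) ∂(ν : Measure S)
          ≤ ∫⁻ y, Uo.indicator (1 : S → ℝ≥0∞) y ∂(ν : Measure S) :=
            lintegral_mono hle_ind
        _ = (ν : Measure S) Uo := by rw [lintegral_indicator_one hUo.measurableSet]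
    calc lamI (π ⁻¹' F) ≤ Lim hb := h1
      _ = ∫⁻ y, (h y : ℝ≥0∞) ∂(ν : Measure S) := h2
      _ ≤ (ν : Measure S) Uo := h3
      _ ≤ (ν : Measure S) F + ε := hUm
  refine ⟨lamI, hlamIprob, ?_, ?_, hfull⟩
  · haveI : IsProbabilityMeasure (lamI.map Prod.fst) :=
      Measure.isProbabilityMeasure_map measurable_fst.aemeasurable
    refine aux_eq_of_le_on_closed _ _ fun F hF => ?_
    rw [Measure.map_apply measurable_fst hF.measurableSet]
    exact hmar Prod.fst continuous_fst μ₁ ν₁ hfst h₁ F hF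
  · haveI : IsProbabilityMeasure (lamI.map Prod.snd) :=
      Measure.isProbabilityMeasure_map measurable_snd.aemeasurable
    refine aux_eq_of_le_on_closed _ _ fun F hF => ?_
    rw [Measure.map_apply measurable_snd hF.measurableSet]
    exact hmar Prod.snd continuous_snd μ₂ ν₂ hsnd h₂ F hF
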